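/- Let h⁽¹⁾ : ℝ^{d₁} × ℝ^{d₂} × ℝ^{d₃} → ℝ^{d₁} be Lipschitz continuous and suppose assumption (B.3.1) holds. Let W⁽²⁾ ⊂ ℝ^{d₂} and W⁽³⁾ ⊂ ℝ^{d₃} be compact sets. Then for every ε > 0 there exist c_ε ≥ 1, r_ε > 0 and T_ε > 0 such that: for every c ≥ c_ε, every x¹ ∈ ℝ^{d₁} with ‖x¹‖ < 1, every (x², x³) ∈ W⁽²⁾ × W⁽³⁾, every t ≥ T_ε, every pair of continuous external inputs x̃² : [0,t] → ℝ^{d₂}, x̃³ : [0,t] → ℝ^{d₃} with ‖x̃²(s) − x²‖ < r_ε and ‖x̃³(s) − x³‖ < r_ε for all s ∈ [0,t], and every differentiable y : [0,t] → ℝ^{d₁} satisfying ẏ(s) = h⁽¹⁾_c(y(s), x̃²(s), x̃³(s)) for all s ∈ [0,t] and y(0) = x¹, one has ‖y(t) − λ⁽¹⁾_∞(x², x³)‖ ≤ 2ε. -/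

import Mathlib

open Filter

noncomputable section

/-- `ℝ^d` with the Euclidean norm. -/
abbrev Euc (d : ℕ) : Type := EuclideanSpace ℝ (Fin d)

/-- `p` is the unique globally asymptotically stable equilibrium of the ODE `ẋ = f x`:
`f p = 0`, `p` is the only zero of `f`, every solution (on `[0,∞)`) converges to `p`,
and solutions starting near `p` stay near `p`. -/
def IsUniqueGase {d : ℕ} (f : Euc d → Euc d) (p : Euc d) : Prop :=
  f p = 0 ∧ (∀ q, f q = 0 → q = p) ∧
  (∀ x : ℝ → Euc d, (∀ t : ℝ, 0 ≤ t → HasDerivAt x (f (x t)) t) →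
    Tendsto x atTop (nhds p)) ∧
  ∀ ε > (0:ℝ), ∃ δ > (0:ℝ), ∀ x : ℝ → Euc d,
    (∀ t : ℝ, 0 ≤ t → HasDerivAt x (f (x t)) t) →
    ‖x 0 - p‖ < δ → ∀ t : ℝ, 0 ≤ t → ‖x t - p‖ ≤ ε

namespace TrackAux

variable {d : ℕ} {f : Euc d → Euc d} {Kn : NNReal}

open Set Real Topology

lemma exists_localSol (hf : LipschitzWith Kn f) (t₀ : ℝ) (x₀ : Euc d) :
    ∃ y : ℝ → Euc d, y t₀ = x₀ ∧ ∀ t ∈ Icc (t₀ - ((Kn:ℝ)+1)⁻¹) (t₀ + ((Kn:ℝ)+1)⁻¹),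
      HasDerivWithinAt y (f (y t)) (Icc (t₀ - ((Kn:ℝ)+1)⁻¹) (t₀ + ((Kn:ℝ)+1)⁻¹)) t := by
  have hK1 : (0:ℝ) < (Kn:ℝ)+1 := by positivity
  set a : ℝ := ((Kn:ℝ)+1)⁻¹ with ha
  have ha0 : 0 < a := by positivity
  set R : ℝ := ‖f x₀‖ + 1 with hR
  have hR1 : (1:ℝ) ≤ R := by have := norm_nonneg (f x₀); simp only [hR]; linarith
  set Rn : NNReal := ‖f x₀‖₊ + 1 with hRndef
  have hRn : (Rn:ℝ) = R := by simp [hRndef, hR]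
  have hpl : IsPicardLindelof (fun _ x => f x) (tmin := t₀ - a) (tmax := t₀ + a)
      ⟨t₀, ⟨by linarith, by linarith⟩⟩ x₀ Rn 0 ((Kn+1)*Rn) Kn :=
    { lipschitzOnWith := fun t _ => hf.lipschitzOnWith
      continuousOn := fun x _ => continuousOn_const
      norm_le := by
        intro t _ x hx
        rw [NNReal.coe_mul, NNReal.coe_add, NNReal.coe_one, hRn]
        rw [hRn] at hx
        have h1 : ‖f x - f x₀‖ ≤ (Kn:ℝ) * R := by
          have h2 := hf.dist_le_mul x x₀
          rw [dist_eq_norm] at h2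
          refine h2.trans ?_
          have h3 : dist x x₀ ≤ R := Metric.mem_closedBall.mp hx
          gcongr
        have h4 : ‖f x‖ ≤ ‖f x₀‖ + ‖f x - f x₀‖ := by
          have := norm_sub_norm_le (f x) (f x₀); linarith
        have h5 : ‖f x₀‖ = R - 1 := by simp [hR]
        have hKnn : (0:ℝ) ≤ (Kn:ℝ) := Kn.coe_nonneg
        calc ‖f x‖ ≤ (R - 1) + (Kn:ℝ) * R := by rw [← h5]; linarith
        _ ≤ ((Kn:ℝ)+1)*R := by nlinarith
      mul_max_le := by
        simp only [NNReal.coe_mul, NNReal.coe_add, NNReal.coe_one, NNReal.coe_zero, sub_zero, hRn]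
        rw [add_sub_cancel_left, sub_sub_cancel, max_self, ha]
        have : ((Kn:ℝ)+1)*R*((Kn:ℝ)+1)⁻¹ = (((Kn:ℝ)+1)*((Kn:ℝ)+1)⁻¹)*R := by ring
        rw [this, mul_inv_cancel₀ (ne_of_gt hK1), one_mul] }
  exact hpl.exists_eq_forall_mem_Icc_hasDerivWithinAt₀

lemma extend_sol (hf : LipschitzWith Kn f) {b : ℝ} (hb : ((Kn:ℝ)+1)⁻¹ ≤ b) (y : ℝ → Euc d)
    (hy : ∀ t ∈ Icc (-b) b, HasDerivWithinAt y (f (y t)) (Icc (-b) b) t) :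
    ∃ z : ℝ → Euc d, EqOn z y (Icc (-b) b) ∧
      ∀ t ∈ Icc (-(b+((Kn:ℝ)+1)⁻¹)) (b+((Kn:ℝ)+1)⁻¹),
        HasDerivWithinAt z (f (z t)) (Icc (-(b+((Kn:ℝ)+1)⁻¹)) (b+((Kn:ℝ)+1)⁻¹)) t := by
  classical
  have hK1 : (0:ℝ) < (Kn:ℝ)+1 := by positivity
  set a : ℝ := ((Kn:ℝ)+1)⁻¹ with ha
  have ha0 : 0 < a := by positivity
  have hb0 : 0 < b := lt_of_lt_of_le ha0 hb
  obtain ⟨u, hu0, hu⟩ := exists_localSol hf b (y b)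
  obtain ⟨v, hv0, hv⟩ := exists_localSol hf (-b) (y (-b))
  set J : Set ℝ := Icc (-(b+a)) (b+a) with hJ
  set z : ℝ → Euc d := fun t => if t < -b then v t else if t ≤ b then y t else u t with hzdef
  have hz1 : ∀ s, s < -b → z s = v s := by intro s hs; simp [hzdef, hs]
  have hz2 : ∀ s, -b ≤ s → s ≤ b → z s = y s := by
    intro s h1 h2; simp [hzdef, not_lt.mpr h1, h2]
  have hz3 : ∀ s, b < s → z s = u s := by
    intro s hs; simp [hzdef, not_lt.mpr (le_of_lt (lt_trans (neg_lt_self hb0) hs)),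
      not_le.mpr hs]
  have hEq : EqOn z y (Icc (-b) b) := fun s hs => hz2 s hs.1 hs.2
  refine ⟨z, hEq, ?_⟩
  intro t ht
  rcases lt_trichotomy t (-b) with hc | hc | hc
  · -- t < -b : left outer piece
    have hvd := hv t ⟨by have := ht.1; linarith, by linarith⟩
    have hmem : Icc (-b-a) (-b+a) ∈ 𝓝[J] t :=
      mem_nhdsWithin.mpr ⟨Iio (-b+a), isOpen_Iio, by simp only [mem_Iio]; linarith,
        fun s hs => ⟨by have := hs.2.1; linarith, le_of_lt hs.1⟩⟩
    have h2 := hvd.mono_of_mem_nhdsWithin hmem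
    have h3 : z =ᶠ[𝓝[J] t] v := by
      filter_upwards [mem_nhdsWithin_of_mem_nhds (Iio_mem_nhds hc)] with s hs
      exact hz1 s hs
    have h4 := h2.congr_of_eventuallyEq h3 (hz1 t hc)
    rwa [hz1 t hc]
  · -- t = -b : left junction
    subst t
    have left : HasDerivWithinAt z (f (y (-b))) (J ∩ Iic (-b)) (-b) := by
      have hvd := hv (-b) ⟨by linarith, by linarith⟩
      rw [hv0] at hvd
      have hsub : J ∩ Iic (-b) ⊆ Icc (-b-a) (-b+a) := fun s hs =>
        ⟨by have := hs.1.1; linarith, by have := hs.2; simp only [mem_Iic] at this; linarith⟩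
      have h1 := hvd.mono hsub
      refine h1.congr (fun s hs => ?_) ?_
      · rcases lt_or_eq_of_le (mem_Iic.mp hs.2) with h | h
        · rw [hz1 s h]
        · rw [h, hz2 (-b) le_rfl (by linarith), hv0]
      · rw [hz2 (-b) le_rfl (by linarith), hv0]
    have right : HasDerivWithinAt z (f (y (-b))) (J ∩ Ici (-b)) (-b) := by
      have hyd := hy (-b) ⟨le_rfl, by linarith⟩
      have hmem : Icc (-b) b ∈ 𝓝[J ∩ Ici (-b)] (-b) :=
        mem_nhdsWithin.mpr ⟨Iio b, isOpen_Iio, by simp only [mem_Iio]; linarith,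
          fun s hs => ⟨hs.2.2, le_of_lt hs.1⟩⟩
      have h1 := hyd.mono_of_mem_nhdsWithin hmem
      have h3 : z =ᶠ[𝓝[J ∩ Ici (-b)] (-b)] y := by
        filter_upwards [mem_nhdsWithin_of_mem_nhds (Iio_mem_nhds (by linarith : -b < b)),
          self_mem_nhdsWithin] with s hs hs'
        exact hz2 s hs'.2 (le_of_lt hs)
      exact h1.congr_of_eventuallyEq h3 (hz2 (-b) le_rfl (by linarith))
    have := left.union right
    rw [← Set.inter_union_distrib_left, Set.Iic_union_Ici, Set.inter_univ] at this
    rwa [hz2 (-b) le_rfl (by linarith)]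
  · rcases lt_trichotomy t b with hc' | hc' | hc'
    · -- interior
      have hyd := (hy t ⟨le_of_lt hc, le_of_lt hc'⟩).hasDerivAt
        (Icc_mem_nhds hc hc')
      have h3 : z =ᶠ[𝓝 t] y := by
        filter_upwards [Ioo_mem_nhds hc hc'] with s hs
        exact hz2 s (le_of_lt hs.1) (le_of_lt hs.2)
      have h4 := hyd.congr_of_eventuallyEq h3
      rw [← hz2 t (le_of_lt hc) (le_of_lt hc')] at h4
      exact h4.hasDerivWithinAt
    · -- t = b : right junction
      subst t
      have left : HasDerivWithinAt z (f (y b)) (J ∩ Iic b) b := by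
        have hyd := hy b ⟨by linarith, le_rfl⟩
        have hmem : Icc (-b) b ∈ 𝓝[J ∩ Iic b] b :=
          mem_nhdsWithin.mpr ⟨Ioi (-b), isOpen_Ioi, by simp only [mem_Ioi]; linarith,
            fun s hs => ⟨le_of_lt hs.1, hs.2.2⟩⟩
        have h1 := hyd.mono_of_mem_nhdsWithin hmem
        have h3 : z =ᶠ[𝓝[J ∩ Iic b] b] y := by
          filter_upwards [mem_nhdsWithin_of_mem_nhds (Ioi_mem_nhds (by linarith : -b < b)),
            self_mem_nhdsWithin] with s hs hs'
          exact hz2 s (le_of_lt hs) hs'.2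
        exact h1.congr_of_eventuallyEq h3 (hz2 b (by linarith) le_rfl)
      have right : HasDerivWithinAt z (f (y b)) (J ∩ Ici b) b := by
        have hud := hu b ⟨by linarith, by linarith⟩
        rw [hu0] at hud
        have hsub : J ∩ Ici b ⊆ Icc (b-a) (b+a) := fun s hs =>
          ⟨by have := hs.2; simp only [mem_Ici] at this; linarith, hs.1.2⟩
        have h1 := hud.mono hsub
        refine h1.congr (fun s hs => ?_) ?_
        · rcases lt_or_eq_of_le (mem_Ici.mp hs.2) with h | h
          · rw [hz3 s h]
          · rw [← h, hz2 b (by linarith) le_rfl, hu0]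
        · rw [hz2 b (by linarith) le_rfl, hu0]
      have := left.union right
      rw [← Set.inter_union_distrib_left, Set.Iic_union_Ici, Set.inter_univ] at this
      rwa [hz2 b (by linarith) le_rfl]
    · -- b < t : right outer piece
      have hud := hu t ⟨by linarith, ht.2⟩
      have hmem : Icc (b-a) (b+a) ∈ 𝓝[J] t :=
        mem_nhdsWithin.mpr ⟨Ioi (b-a), isOpen_Ioi, by simp only [mem_Ioi]; linarith,
          fun s hs => ⟨le_of_lt hs.1, hs.2.2⟩⟩
      have h2 := hud.mono_of_mem_nhdsWithin hmem
      have h3 : z =ᶠ[𝓝[J] t] u := by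
        filter_upwards [mem_nhdsWithin_of_mem_nhds (Ioi_mem_nhds hc')] with s hs
        exact hz3 s hs
      have h4 := h2.congr_of_eventuallyEq h3 (hz3 t hc')
      rwa [hz3 t hc']
lemma exists_solOn (hf : LipschitzWith Kn f) (x₀ : Euc d) (n : ℕ) :
    ∃ y : ℝ → Euc d, y 0 = x₀ ∧ ∀ t ∈ Icc (-(((n:ℝ)+1)*((Kn:ℝ)+1)⁻¹)) (((n:ℝ)+1)*((Kn:ℝ)+1)⁻¹),
      HasDerivWithinAt y (f (y t)) (Icc (-(((n:ℝ)+1)*((Kn:ℝ)+1)⁻¹)) (((n:ℝ)+1)*((Kn:ℝ)+1)⁻¹)) t := by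
  have hK1 : (0:ℝ) < (Kn:ℝ)+1 := by positivity
  set a : ℝ := ((Kn:ℝ)+1)⁻¹ with ha
  have ha0 : 0 < a := by positivity
  induction n with
  | zero =>
    obtain ⟨y, h0, hy⟩ := exists_localSol hf 0 x₀
    refine ⟨y, h0, ?_⟩
    have h1 : ((0:ℕ):ℝ) + 1 = 1 := by norm_num
    rw [h1, one_mul]
    have h2 : (0:ℝ) - a = -a := by ring
    have h3 : (0:ℝ) + a = a := by ring
    rw [h2, h3] at hy
    exact hy
  | succ n ih =>
    obtain ⟨y, h0, hy⟩ := ih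
    have hble : a ≤ ((n:ℝ)+1)*a := by nlinarith [Nat.cast_nonneg (α := ℝ) n]
    obtain ⟨z, hEq, hz⟩ := extend_sol hf hble y hy
    refine ⟨z, ?_, ?_⟩
    · rw [hEq ⟨by simp; positivity, by positivity⟩, h0]
    · have hc2 : (((n+1:ℕ)):ℝ) + 1 = ((n:ℝ)+1) + 1 := by push_cast; ring
      rw [hc2]
      have hc3 : (((n:ℝ)+1)+1)*a = ((n:ℝ)+1)*a + a := by ring
      rw [hc3]
      exact hz

lemma exists_globalSol (hf : LipschitzWith Kn f) (x₀ : Euc d) :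
    ∃ x : ℝ → Euc d, x 0 = x₀ ∧ ∀ t, HasDerivAt x (f (x t)) t := by
  classical
  have hK1 : (0:ℝ) < (Kn:ℝ)+1 := by positivity
  set a : ℝ := ((Kn:ℝ)+1)⁻¹ with ha
  have ha0 : 0 < a := by positivity
  choose Y hY0 hY using exists_solOn hf x₀
  have hagree : ∀ m n : ℕ, m ≤ n → EqOn (Y m) (Y n) (Icc (-(((m:ℝ)+1)*a)) (((m:ℝ)+1)*a)) := by
    intro m n hmn
    have hbm : (0:ℝ) < ((m:ℝ)+1)*a := by positivity
    have hle : ((m:ℝ)+1)*a ≤ ((n:ℝ)+1)*a := by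
      have : ((m:ℝ)+1) ≤ ((n:ℝ)+1) := by exact_mod_cast Nat.succ_le_succ hmn
      nlinarith
    apply ODE_solution_unique_of_mem_Icc (v := fun _ x => f x) (s := fun _ => univ)
      (K := Kn) (t₀ := 0)
      (fun _ _ => hf.lipschitzOnWith)
      (ht := ⟨by linarith, by linarith⟩)
      (hf := fun t ht => (hY m t ht).continuousWithinAt)
      (hf' := ?_) (hfs := fun _ _ => trivial)
      (hg := fun t ht => ((hY n t ⟨by have := ht.1; linarith, le_trans ht.2 hle⟩).continuousWithinAt).mono
        (Icc_subset_Icc (by linarith) hle))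
      (hg' := ?_) (hgs := fun _ _ => trivial)
      (heq := by rw [hY0 m, hY0 n])
    · intro t ht
      exact (hY m t ⟨le_of_lt ht.1, le_of_lt ht.2⟩).hasDerivAt
        (Icc_mem_nhds ht.1 ht.2)
    · intro t ht
      exact (hY n t ⟨by have := ht.1; linarith, le_trans (le_of_lt ht.2) hle⟩).hasDerivAt
        (Icc_mem_nhds (by have := ht.1; linarith) (lt_of_lt_of_le ht.2 hle))
  set N : ℝ → ℕ := fun t => ⌊|t|/a⌋₊ with hN
  have hmem : ∀ t, t ∈ Icc (-(((N t:ℝ)+1)*a)) (((N t:ℝ)+1)*a) := by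
    intro t
    have h1 : |t|/a < (N t:ℝ) + 1 := Nat.lt_floor_add_one _
    have h2 : |t| < ((N t:ℝ)+1)*a := by
      rw [div_lt_iff₀ ha0] at h1; linarith
    have := abs_le.mp (le_of_lt h2)
    exact ⟨this.1, this.2⟩
  set x : ℝ → Euc d := fun t => Y (N t) t with hx
  have hxeq : ∀ n : ℕ, EqOn x (Y n) (Icc (-(((n:ℝ)+1)*a)) (((n:ℝ)+1)*a)) := by
    intro n t ht
    rcases le_total (N t) n with h | h
    · exact hagree (N t) n h (hmem t)
    · exact (hagree n (N t) h ht).symm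
  have hx0 : x 0 = x₀ := by
    have : N 0 = 0 := by simp [hN]
    simp only [hx]; rw [this, hY0]
  refine ⟨x, hx0, ?_⟩
  intro t
  set n : ℕ := N t + 1 with hn
  have hlt : |t| < ((n:ℝ)+1)*a := by
    have h2 := (hmem t)
    have h3 : |t| ≤ ((N t:ℝ)+1)*a := abs_le.mpr ⟨h2.1, h2.2⟩
    have : ((N t:ℝ)+1)*a < ((n:ℝ)+1)*a := by
      have : ((N t:ℝ)+1) < ((n:ℝ)+1) := by push_cast [hn]; linarith
      nlinarith
    linarith
  have htIoo : t ∈ Ioo (-(((n:ℝ)+1)*a)) (((n:ℝ)+1)*a) := by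
    have := abs_lt.mp hlt; exact ⟨this.1, this.2⟩
  have hd := (hY n t ⟨le_of_lt htIoo.1, le_of_lt htIoo.2⟩).hasDerivAt
    (Icc_mem_nhds htIoo.1 htIoo.2)
  have heq : x =ᶠ[𝓝 t] Y n := by
    filter_upwards [Ioo_mem_nhds htIoo.1 htIoo.2] with s hs
    exact hxeq n ⟨le_of_lt hs.1, le_of_lt hs.2⟩
  have := hd.congr_of_eventuallyEq heq
  rwa [← hxeq n ⟨le_of_lt htIoo.1, le_of_lt htIoo.2⟩] at this

lemma gb_mono {δ K ε : ℝ} (hδ : 0 ≤ δ) (hε : 0 ≤ ε) (hK : 0 < K) {x x' : ℝ} (h : x ≤ x') :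
    gronwallBound δ K ε x ≤ gronwallBound δ K ε x' := by
  simp only [gronwallBound_of_K_ne_0 hK.ne']
  have h1 : exp (K*x) ≤ exp (K*x') := exp_le_exp.mpr (by nlinarith)
  have h2 : 0 ≤ ε / K := div_nonneg hε hK.le
  nlinarith


lemma lip_scaled {h1 : Euc d1 → Euc d2 → Euc d3 → Euc d1} {Kn : NNReal}
    (hL : LipschitzWith Kn (fun q : Euc d1 × Euc d2 × Euc d3 => h1 q.1 q.2.1 q.2.2))
    {c : ℝ} (hc : 0 < c) :
    LipschitzWith Kn (fun q : Euc d1 × Euc d2 × Euc d3 =>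
      c⁻¹ • h1 (c • q.1) (c • q.2.1) (c • q.2.2)) := by
  apply LipschitzWith.of_dist_le_mul
  intro q q'
  have e1 : dist (c⁻¹ • h1 (c • q.1) (c • q.2.1) (c • q.2.2))
      (c⁻¹ • h1 (c • q'.1) (c • q'.2.1) (c • q'.2.2))
      = c⁻¹ * dist (h1 (c • q.1) (c • q.2.1) (c • q.2.2))
          (h1 (c • q'.1) (c • q'.2.1) (c • q'.2.2)) := by
    rw [dist_smul₀]
    congr 1
    rw [Real.norm_eq_abs, abs_of_pos (inv_pos.mpr hc)]
  have e2 : dist (h1 (c • q.1) (c • q.2.1) (c • q.2.2))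
      (h1 (c • q'.1) (c • q'.2.1) (c • q'.2.2)) ≤ Kn * dist (c • q) (c • q') := by
    have := hL.dist_le_mul (c • q) (c • q')
    simpa using this
  have e3 : dist (c • q) (c • q') = c * dist q q' := by
    rw [dist_smul₀, Real.norm_eq_abs, abs_of_pos hc]
  rw [e1]
  rw [e3] at e2
  have h4 : c⁻¹ * dist (h1 (c • q.1) (c • q.2.1) (c • q.2.2))
      (h1 (c • q'.1) (c • q'.2.1) (c • q'.2.2)) ≤ c⁻¹ * ((Kn:ℝ) * (c * dist q q')) :=
    mul_le_mul_of_nonneg_left e2 (by positivity)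
  have h5 : c⁻¹ * ((Kn:ℝ) * (c * dist q q')) = (Kn:ℝ) * dist q q' := by
    field_simp
  linarith

lemma lip_limit {h1 : Euc d1 → Euc d2 → Euc d3 → Euc d1} {Kn : NNReal}
    {h1inf : Euc d1 → Euc d2 → Euc d3 → Euc d1}
    (hL : LipschitzWith Kn (fun q : Euc d1 × Euc d2 × Euc d3 => h1 q.1 q.2.1 q.2.2))
    (hB1conv : ∀ K' : Set (Euc d1 × Euc d2 × Euc d3), IsCompact K' →
      TendstoUniformlyOn
        (fun (c : ℝ) (p : Euc d1 × Euc d2 × Euc d3) =>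
          c⁻¹ • h1 (c • p.1) (c • p.2.1) (c • p.2.2))
        (fun p => h1inf p.1 p.2.1 p.2.2) atTop K') :
    LipschitzWith Kn (fun q : Euc d1 × Euc d2 × Euc d3 => h1inf q.1 q.2.1 q.2.2) := by
  apply LipschitzWith.of_dist_le_mul
  intro q q'
  have hcpt : IsCompact ({q, q'} : Set (Euc d1 × Euc d2 × Euc d3)) :=
    ((Set.finite_singleton q').insert q).isCompact
  have h := hB1conv {q, q'} hcpt
  have hq := h.tendsto_at (by simp : q ∈ ({q, q'} : Set _))
  have hq' := h.tendsto_at (by simp : q' ∈ ({q, q'} : Set _))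
  have hd := hq.dist hq'
  refine le_of_tendsto hd ?_
  filter_upwards [eventually_ge_atTop (1:ℝ)] with c hc
  exact (lip_scaled hL (lt_of_lt_of_le one_pos hc)).dist_le_mul q q'

variable {d1 d2 d3 : ℕ}

set_option maxHeartbeats 2000000 in
lemma key (h1 : Euc d1 → Euc d2 → Euc d3 → Euc d1) (Kn : NNReal) (hKn1 : 1 ≤ (Kn:ℝ))
    (hLip : LipschitzWith Kn (fun p : Euc d1 × Euc d2 × Euc d3 => h1 p.1 p.2.1 p.2.2))
    (h1inf : Euc d1 → Euc d2 → Euc d3 → Euc d1)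
    (lam1inf : Euc d2 → Euc d3 → Euc d1)
    (hB1conv : ∀ K' : Set (Euc d1 × Euc d2 × Euc d3), IsCompact K' →
      TendstoUniformlyOn
        (fun (c : ℝ) (p : Euc d1 × Euc d2 × Euc d3) =>
          c⁻¹ • h1 (c • p.1) (c • p.2.1) (c • p.2.2))
        (fun p => h1inf p.1 p.2.1 p.2.2) atTop K')
    (hB1 : ∀ y z, IsUniqueGase (fun v => h1inf v y z) (lam1inf y z))
    (p2 : Euc d2) (p3 : Euc d3) {ε : ℝ} (hε : 0 < ε) :
    ∃ c ≥ (1:ℝ), ∃ r : ℝ, 0 < r ∧ r ≤ 1 ∧ ∃ T > (0:ℝ),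
      ∀ c' ≥ c, ∀ t ≥ T, ∀ (xt2 : ℝ → Euc d2) (xt3 : ℝ → Euc d3),
        (∀ s ∈ Icc (0:ℝ) t, ‖xt2 s - p2‖ < r ∧ ‖xt3 s - p3‖ < r) →
        ∀ y : ℝ → Euc d1,
          (∀ s ∈ Icc (0:ℝ) t, HasDerivAt y (c'⁻¹ • h1 (c' • y s) (c' • xt2 s) (c' • xt3 s)) s) →
          ‖y 0‖ < 1 → ‖y t - lam1inf p2 p3‖ ≤ ε := by
  classical
  have hKpos : (0:ℝ) < (Kn:ℝ) := lt_of_lt_of_le one_pos hKn1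
  set lam0 : Euc d1 := lam1inf p2 p3 with hlam0
  set F : Euc d1 × Euc d2 × Euc d3 → Euc d1 := fun q => h1inf q.1 q.2.1 q.2.2 with hF
  have hFlip : LipschitzWith Kn F := lip_limit hLip hB1conv
  set f0 : Euc d1 → Euc d1 := fun v => h1inf v p2 p3 with hf0
  have hf0lip : LipschitzWith Kn f0 := by
    apply LipschitzWith.of_dist_le_mul
    intro u v
    have := hFlip.dist_le_mul (u, p2, p3) (v, p2, p3)
    simpa [hF, Prod.dist_eq, dist_nonneg] using this
  obtain ⟨-, -, hconv, hstab⟩ := hB1 p2 p3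
  -- stability radii
  obtain ⟨δ1', hδ1'pos, hδ1'⟩ := hstab (ε/2) (half_pos hε)
  set δ1 : ℝ := min δ1' (ε/2) with hδ1def
  have hδ1pos : 0 < δ1 := lt_min hδ1'pos (half_pos hε)
  have hδ1le : δ1 ≤ δ1' := min_le_left _ _
  obtain ⟨δ2', hδ2'pos, hδ2'⟩ := hstab (δ1/4) (by positivity)
  set δ2 : ℝ := min δ2' (δ1/2) with hδ2def
  have hδ2pos : 0 < δ2 := lt_min hδ2'pos (by positivity)
  have hδ2le : δ2 ≤ δ2' := min_le_left _ _
  set R0 : ℝ := max 1 (‖lam0‖ + δ1) with hR0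
  have hR0ge1 : (1:ℝ) ≤ R0 := le_max_left _ _
  -- uniform reach time T0
  have hreach : ∃ T0 ≥ (1:ℝ), ∀ x : ℝ → Euc d1, (∀ s, HasDerivAt x (f0 (x s)) s) →
      ‖x 0‖ ≤ R0 → ∀ s ≥ T0, ‖x s - lam0‖ ≤ δ1/4 := by
    choose X hX0 hXd using fun v : Euc d1 => exists_globalSol hf0lip v
    have hTv : ∀ v : Euc d1, ∃ T ≥ (1:ℝ), ‖X v T - lam0‖ < δ2/2 := by
      intro v
      have htd := hconv (X v) (fun s _ => hXd v s)
      have hev : ∀ᶠ s in atTop, dist (X v s) lam0 < δ2/2 :=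
        htd (Metric.ball_mem_nhds lam0 (by positivity))
      obtain ⟨T', hT'⟩ := eventually_atTop.mp hev
      refine ⟨max T' 1, le_max_right _ _, ?_⟩
      have := hT' (max T' 1) (le_max_left _ _)
      rwa [dist_eq_norm] at this
    choose T hT1 hTb using hTv
    set ρ : Euc d1 → ℝ := fun v => (δ2/2) * exp (-(Kn:ℝ) * T v) with hρ
    have hρpos : ∀ v, 0 < ρ v := fun v => by positivity
    obtain ⟨S, hS⟩ := (isCompact_closedBall (0:Euc d1) R0).elim_finite_subcover
      (fun v : Euc d1 => Metric.ball v (ρ v)) (fun v => Metric.isOpen_ball)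
      (fun v _ => mem_iUnion.mpr ⟨v, Metric.mem_ball_self (hρpos v)⟩)
    set T0 : ℝ := 1 + ∑ v ∈ S, T v with hT0
    have hT0ge : ∀ v ∈ S, T v ≤ T0 := by
      intro v hv
      have h1 : T v ≤ ∑ w ∈ S, T w :=
        Finset.single_le_sum (fun w _ => le_trans zero_le_one (hT1 w)) hv
      linarith
    have hT0ge1 : (1:ℝ) ≤ T0 := by
      have : (0:ℝ) ≤ ∑ v ∈ S, T v :=
        Finset.sum_nonneg (fun w _ => le_trans zero_le_one (hT1 w))
      linarith
    refine ⟨T0, hT0ge1, ?_⟩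
    intro x hxd hx0 s hs
    have hxmem : x 0 ∈ Metric.closedBall (0:Euc d1) R0 := by
      simpa [Metric.mem_closedBall, dist_zero_right] using hx0
    obtain ⟨i, hiS, hib⟩ : ∃ i ∈ S, x 0 ∈ Metric.ball i (ρ i) := by
      have := hS hxmem
      simpa using this
    have hTi0 : (0:ℝ) ≤ T i := le_trans zero_le_one (hT1 i)
    -- compare x with X i on [0, T i]
    have hcmp := dist_le_of_trajectories_ODE (v := fun _ u => f0 u) (K := Kn)
      (fun _ => hf0lip)
      (fun u hu => (hxd u).continuousAt.continuousWithinAt)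
      (fun u _ => (hxd u).hasDerivWithinAt)
      (fun u hu => (hXd i u).continuousAt.continuousWithinAt)
      (fun u _ => (hXd i u).hasDerivWithinAt)
      (le_of_lt (by rw [hX0]; exact Metric.mem_ball.mp hib)) (T i) ⟨hTi0, le_refl _⟩
    have hval : dist (x (T i)) (X i (T i)) ≤ δ2/2 := by
      refine hcmp.trans ?_
      rw [sub_zero]
      have : ρ i * exp ((Kn:ℝ) * T i) = δ2/2 := by
        rw [hρ]
        simp only
        rw [mul_assoc, ← Real.exp_add]
        ring_nf
        simp
      rw [← this]
    have hxTi : ‖x (T i) - lam0‖ < δ2 := by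
      have h2 := hTb i
      have h3 : dist (x (T i)) lam0 ≤ dist (x (T i)) (X i (T i)) + dist (X i (T i)) lam0 :=
        dist_triangle _ _ _
      rw [dist_eq_norm, dist_eq_norm, dist_eq_norm] at h3
      rw [dist_eq_norm] at hval
      linarith
    -- stability from time T i
    set w : ℝ → Euc d1 := fun u => x (u + T i) with hw
    have hwd : ∀ u : ℝ, HasDerivAt w (f0 (w u)) u := fun u =>
      HasDerivAt.comp_add_const u (T i) (hxd (u + T i))
    have hstay := hδ2' w (fun u _ => hwd u) (by
      show ‖x (0 + T i) - lam0‖ < δ2'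
      rw [zero_add]
      exact lt_of_lt_of_le hxTi hδ2le)
    have hfin := hstay (s - T i) (by have := hT0ge i hiS; linarith)
    simpa [hw, sub_add_cancel] using hfin
  obtain ⟨T0, hT0ge1, hreach'⟩ := hreach
  have hT0pos : (0:ℝ) < T0 := lt_of_lt_of_le one_pos hT0ge1
  -- constants
  set Bm : ℝ := max (‖p2‖ + 1) (‖p3‖ + 1) with hBm
  have hBm0 : 0 ≤ Bm := le_trans (by positivity) (le_max_left _ _)
  set M : ℝ := ‖h1 0 0 0‖ + (Kn:ℝ) * Bm with hM
  have hM0 : 0 ≤ M := by positivity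
  set R2 : ℝ := gronwallBound R0 Kn M T0 with hR2
  have hR2ge : R0 ≤ R2 := by
    have := gb_mono (le_trans zero_le_one hR0ge1) hM0 hKpos (le_of_lt hT0pos) (x := 0)
    simpa [gronwallBound_x0] using this
  set A : ℝ := (exp ((Kn:ℝ)*T0) - 1)/(Kn:ℝ) with hA
  have hA0 : 0 ≤ A := by
    have h1e : (1:ℝ) ≤ exp ((Kn:ℝ)*T0) := by
      rw [← Real.exp_zero]
      exact exp_le_exp.mpr (by positivity)
    have h2e : (0:ℝ) ≤ exp ((Kn:ℝ)*T0) - 1 := by linarith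
    exact div_nonneg h2e hKpos.le
  set η : ℝ := (min (δ1/2) (ε/2))/(A+1) with hη
  have hηpos : 0 < η := div_pos (lt_min (by positivity) (half_pos hε)) (by linarith)
  have hηA : η * A ≤ min (δ1/2) (ε/2) := by
    have h1 : η * A ≤ η * (A+1) := by nlinarith
    have h2 : η * (A+1) = min (δ1/2) (ε/2) := by
      rw [hη]; field_simp
    linarith
  -- uniform convergence threshold
  set K' : Set (Euc d1 × Euc d2 × Euc d3) :=
    Metric.closedBall (0:Euc d1) R2 ×ˢ Metric.closedBall p2 1 ×ˢ Metric.closedBall p3 1 with hK'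
  have hK'cpt : IsCompact K' :=
    (isCompact_closedBall _ _).prod ((isCompact_closedBall _ _).prod (isCompact_closedBall _ _))
  have huc := (Metric.tendstoUniformlyOn_iff.mp (hB1conv K' hK'cpt)) (η/2) (by positivity)
  obtain ⟨c0, hc0⟩ := eventually_atTop.mp huc
  refine ⟨max c0 1, le_max_right _ _, min 1 (η/(2*(Kn:ℝ))), lt_min one_pos (by positivity),
    min_le_left _ _, T0, hT0pos, ?_⟩
  set r : ℝ := min 1 (η/(2*(Kn:ℝ))) with hr
  intro c' hc' t ht xt2 xt3 hin y hy hy0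
  have hc'1 : (1:ℝ) ≤ c' := le_trans (le_max_right _ _) hc'
  have hc'pos : (0:ℝ) < c' := lt_of_lt_of_le one_pos hc'1
  have hc'c0 : c0 ≤ c' := le_trans (le_max_left _ _) hc'
  set Fc : Euc d1 × Euc d2 × Euc d3 → Euc d1 :=
    fun q => c'⁻¹ • h1 (c' • q.1) (c' • q.2.1) (c' • q.2.2) with hFc
  have hFclip : LipschitzWith Kn Fc := lip_scaled hLip hc'pos
  set g : ℝ → Euc d1 := fun s => Fc (y s, xt2 s, xt3 s) with hg
  have hyd : ∀ s ∈ Icc (0:ℝ) t, HasDerivAt y (g s) s := hy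
  -- magnitude bound on g
  have hgK : ∀ s ∈ Icc (0:ℝ) t, ‖g s‖ ≤ (Kn:ℝ) * ‖y s‖ + M := by
    intro s hs
    have h0 : Fc (0, 0, 0) = c'⁻¹ • h1 0 0 0 := by
      show c'⁻¹ • h1 (c' • (0:Euc d1)) (c' • (0:Euc d2)) (c' • (0:Euc d3)) = c'⁻¹ • h1 0 0 0
      rw [smul_zero, smul_zero, smul_zero]
    have h1' : ‖Fc (0,0,0)‖ ≤ ‖h1 0 0 0‖ := by
      rw [h0, norm_smul]
      have : ‖c'⁻¹‖ ≤ 1 := by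
        rw [Real.norm_eq_abs, abs_of_pos (by positivity)]
        rw [inv_le_one_iff₀]; right; exact hc'1
      nlinarith [norm_nonneg (h1 (0:Euc d1) (0:Euc d2) (0:Euc d3))]
    have h2 : dist (g s) (Fc (0,0,0)) ≤ (Kn:ℝ) * dist ((y s, xt2 s, xt3 s))
        ((0,0,0) : Euc d1 × Euc d2 × Euc d3) := hFclip.dist_le_mul _ _
    have h3 : dist ((y s, xt2 s, xt3 s)) ((0,0,0) : Euc d1 × Euc d2 × Euc d3)
        ≤ ‖y s‖ + Bm := by
      rw [Prod.dist_eq, Prod.dist_eq]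
      simp only [dist_zero_right]
      have hx2 : ‖xt2 s‖ ≤ ‖p2‖ + 1 := by
        have := (hin s hs).1
        have h4 := norm_le_insert' p2 (xt2 s)
        have hr1 : r ≤ 1 := min_le_left _ _
        calc ‖xt2 s‖ ≤ ‖p2‖ + ‖xt2 s - p2‖ := by
              have := norm_sub_norm_le (xt2 s) p2; linarith
        _ ≤ ‖p2‖ + 1 := by linarith
      have hx3 : ‖xt3 s‖ ≤ ‖p3‖ + 1 := by
        have := (hin s hs).2
        have hr1 : r ≤ 1 := min_le_left _ _
        calc ‖xt3 s‖ ≤ ‖p3‖ + ‖xt3 s - p3‖ := by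
              have := norm_sub_norm_le (xt3 s) p3; linarith
        _ ≤ ‖p3‖ + 1 := by linarith
      apply max_le
      · have : (0:ℝ) ≤ Bm := hBm0; linarith [norm_nonneg (y s)]
      · apply max_le
        · exact le_trans (hx2.trans (le_max_left _ _)) (by linarith [norm_nonneg (y s)])
        · exact le_trans (hx3.trans (le_max_right _ _)) (by linarith [norm_nonneg (y s)])
    have h5 : ‖g s‖ ≤ ‖Fc (0,0,0)‖ + dist (g s) (Fc (0,0,0)) := by
      rw [dist_eq_norm]
      have := norm_sub_norm_le (g s) (Fc (0,0,0))
      linarith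
    have h6 : (Kn:ℝ) * dist ((y s, xt2 s, xt3 s)) ((0,0,0) : Euc d1 × Euc d2 × Euc d3)
        ≤ (Kn:ℝ) * (‖y s‖ + Bm) := by nlinarith
    rw [hM]
    nlinarith
  -- forcing bound
  have hforce : ∀ s ∈ Icc (0:ℝ) t, ‖y s‖ ≤ R2 → dist (g s) (f0 (y s)) ≤ η := by
    intro s hs hyR2
    have hq0 : ((y s, p2, p3) : Euc d1 × Euc d2 × Euc d3) ∈ K' := by
      refine ⟨?_, ?_, ?_⟩
      · simpa [Metric.mem_closedBall, dist_zero_right] using hyR2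
      · simp [Metric.mem_closedBall]
      · simp [Metric.mem_closedBall]
    have hterm2 : dist (Fc (y s, p2, p3)) (f0 (y s)) < η/2 := by
      have := hc0 c' hc'c0 _ hq0
      rw [dist_comm] at this
      exact this
    have hterm1 : dist (g s) (Fc (y s, p2, p3)) ≤ η/2 := by
      have h2 := hFclip.dist_le_mul ((y s, xt2 s, xt3 s)) ((y s, p2, p3))
      have h3 : dist ((y s, xt2 s, xt3 s)) ((y s, p2, p3) : Euc d1 × Euc d2 × Euc d3)
          ≤ η/(2*(Kn:ℝ)) := by
        rw [Prod.dist_eq, Prod.dist_eq]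
        have hrle : r ≤ η/(2*(Kn:ℝ)) := min_le_right _ _
        have h2d : dist (xt2 s) p2 ≤ η/(2*(Kn:ℝ)) := by
          rw [dist_eq_norm]; exact le_trans (le_of_lt (hin s hs).1) hrle
        have h3d : dist (xt3 s) p3 ≤ η/(2*(Kn:ℝ)) := by
          rw [dist_eq_norm]; exact le_trans (le_of_lt (hin s hs).2) hrle
        simp only [dist_self]
        apply max_le (by positivity)
        exact max_le h2d h3d
      calc dist (g s) (Fc (y s, p2, p3)) ≤ (Kn:ℝ) * dist ((y s, xt2 s, xt3 s))
            ((y s, p2, p3) : Euc d1 × Euc d2 × Euc d3) := h2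
      _ ≤ (Kn:ℝ) * (η/(2*(Kn:ℝ))) := by nlinarith
      _ = η/2 := by field_simp
    calc dist (g s) (f0 (y s)) ≤ dist (g s) (Fc (y s, p2, p3)) + dist (Fc (y s, p2, p3)) (f0 (y s)) :=
          dist_triangle _ _ _
    _ ≤ η/2 + η/2 := add_le_add hterm1 (le_of_lt hterm2)
    _ = η := by ring
  -- a priori bound on blocks
  have hAPB : ∀ a b : ℝ, 0 ≤ a → b ≤ t → a ≤ b → b - a ≤ T0 → ‖y a‖ ≤ R0 →
      ∀ s ∈ Icc a b, ‖y s‖ ≤ R2 := by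
    intro a b ha hb hab hlen hya s hs
    have hycont : ContinuousOn y (Icc a b) := fun u hu =>
      ((hy u ⟨le_trans ha hu.1, le_trans hu.2 hb⟩).continuousAt).continuousWithinAt
    have hgb := norm_le_gronwallBound_of_norm_deriv_right_le (f := y) (f' := g)
      (δ := R0) (K := Kn) (ε := M) (a := a) (b := b) hycont
      (fun u hu => (hy u ⟨le_trans ha hu.1, le_trans (le_of_lt hu.2) hb⟩).hasDerivWithinAt)
      hya
      (fun u hu => hgK u ⟨le_trans ha hu.1, le_trans (le_of_lt hu.2) hb⟩)
      s hs
    refine hgb.trans ?_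
    rw [hR2]
    exact gb_mono (le_trans zero_le_one hR0ge1) hM0 hKpos (by linarith [hs.1, hs.2])
  -- comparison with exact solutions on blocks
  have hCMP : ∀ a b : ℝ, 0 ≤ a → b ≤ t → a ≤ b → b - a ≤ T0 → ‖y a‖ ≤ R0 →
      ∃ z : ℝ → Euc d1, z 0 = y a ∧ (∀ u, HasDerivAt z (f0 (z u)) u) ∧
        ∀ s ∈ Icc a b, dist (y s) (z (s - a)) ≤ min (δ1/2) (ε/2) := by
    intro a b ha hb hab hlen hya
    obtain ⟨z, hz0, hzd⟩ := exists_globalSol hf0lip (y a)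
    refine ⟨z, hz0, hzd, ?_⟩
    set w : ℝ → Euc d1 := fun s => z (s - a) with hw
    have hwd : ∀ s : ℝ, HasDerivAt w (f0 (w s)) s := fun s =>
      HasDerivAt.comp_sub_const s a (hzd (s - a))
    have hcmp := dist_le_of_approx_trajectories_ODE (v := fun _ u => f0 u) (K := Kn) (εg := 0)
      (fun _ => hf0lip)
      (fun u hu => ((hy u ⟨le_trans ha hu.1, le_trans hu.2 hb⟩).continuousAt).continuousWithinAt)
      (fun u hu => (hy u ⟨le_trans ha hu.1, le_trans (le_of_lt hu.2) hb⟩).hasDerivWithinAt)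
      (fun u hu => hforce u ⟨le_trans ha hu.1, le_trans (le_of_lt hu.2) hb⟩
        (hAPB a b ha hb hab hlen hya u ⟨hu.1, le_of_lt hu.2⟩))
      (fun u hu => ((hwd u).continuousAt).continuousWithinAt)
      (fun u _ => (hwd u).hasDerivWithinAt)
      (fun u _ => by simp)
      (by
        have : w a = y a := by rw [hw]; simp only [sub_self]; exact hz0
        rw [this, dist_self])
    intro s hs
    have h1 := hcmp s hs
    have h2 : gronwallBound 0 Kn (η + 0) (s - a) ≤ η * A := by
      have h3 := gb_mono (δ := 0) (ε := η + 0) (K := Kn) (le_refl (0:ℝ)) (by linarith [hηpos]) hKpos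
        (show s - a ≤ T0 by linarith [hs.2])
      have h4 : gronwallBound 0 (Kn:ℝ) (η + 0) T0 = η * A := by
        rw [gronwallBound_of_K_ne_0 hKpos.ne']
        rw [hA]
        field_simp
        ring
      calc gronwallBound 0 Kn (η + 0) (s - a) ≤ gronwallBound 0 Kn (η + 0) T0 := h3
      _ = η * A := h4
    exact le_trans h1 (le_trans h2 hηA)
  -- the block induction
  have hyaR0 : ∀ a : ℝ, ‖y a - lam0‖ ≤ δ1 → ‖y a‖ ≤ R0 := by
    intro a hd
    have h1 : ‖y a‖ ≤ ‖lam0‖ + ‖y a - lam0‖ := by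
      have := norm_sub_norm_le (y a) lam0; linarith
    exact le_trans (by linarith) (le_max_right 1 (‖lam0‖ + δ1))
  have hblock : ∀ k : ℕ, ((k:ℝ)+1)*T0 ≤ t → ‖y (((k:ℝ)+1)*T0) - lam0‖ ≤ 3*δ1/4 := by
    intro k
    induction k with
    | zero =>
      intro hk
      simp only [Nat.cast_zero, zero_add, one_mul] at hk ⊢
      have hy0R : ‖y 0‖ ≤ R0 := le_trans (le_of_lt hy0) hR0ge1
      obtain ⟨z, hz0, hzd, hzc⟩ := hCMP 0 T0 le_rfl hk (le_of_lt hT0pos) (by simp) hy0R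
      have hrch := hreach' z hzd (by rw [hz0]; exact hy0R) T0 le_rfl
      have hc1 := hzc T0 ⟨le_of_lt hT0pos, le_rfl⟩
      rw [sub_zero] at hc1
      have htr : dist (y T0) lam0 ≤ dist (y T0) (z T0) + dist (z T0) lam0 := dist_triangle _ _ _
      rw [dist_eq_norm, dist_eq_norm, dist_eq_norm] at htr
      have hmin : min (δ1/2) (ε/2) ≤ δ1/2 := min_le_left _ _
      rw [dist_eq_norm] at hc1
      linarith
    | succ k ih =>
      intro hk
      have hcast : (((k+1:ℕ)):ℝ) + 1 = ((k:ℝ)+1) + 1 := by push_cast; ring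
      rw [hcast] at hk ⊢
      have hkle : ((k:ℝ)+1)*T0 ≤ t := by nlinarith
      have hprev := ih hkle
      set a : ℝ := ((k:ℝ)+1)*T0 with haa
      have ha0 : 0 ≤ a := by positivity
      have hyaR : ‖y a‖ ≤ R0 := hyaR0 a (by linarith)
      have hb : a + T0 ≤ t := by rw [haa]; nlinarith
      obtain ⟨z, hz0, hzd, hzc⟩ := hCMP a (a + T0) ha0 hb (by linarith) (by ring_nf; linarith)
        hyaR
      have hrch := hreach' z hzd (by rw [hz0]; exact hyaR) T0 le_rfl
      have hc1 := hzc (a + T0) ⟨by linarith, le_rfl⟩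
      have hsub : a + T0 - a = T0 := by ring
      rw [hsub] at hc1
      have htr : dist (y (a+T0)) lam0 ≤ dist (y (a+T0)) (z T0) + dist (z T0) lam0 :=
        dist_triangle _ _ _
      rw [dist_eq_norm, dist_eq_norm, dist_eq_norm] at htr
      rw [dist_eq_norm] at hc1
      have hmin : min (δ1/2) (ε/2) ≤ δ1/2 := min_le_left _ _
      have : (((k:ℝ)+1)+1)*T0 = a + T0 := by rw [haa]; ring
      rw [this]
      linarith
  -- conclusion
  set n : ℕ := ⌊t/T0⌋₊ with hn
  have htT0 : (1:ℝ) ≤ t/T0 := by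
    rw [le_div_iff₀ hT0pos]; linarith
  have hn1 : 1 ≤ n := by
    rw [hn]
    exact Nat.le_floor (by exact_mod_cast htT0)
  have hna : (n:ℝ)*T0 ≤ t := by
    have h1 : (n:ℝ) ≤ t/T0 := Nat.floor_le (by positivity)
    rw [← le_div_iff₀ hT0pos] at *
    exact h1
  have hnb : t - (n:ℝ)*T0 ≤ T0 := by
    have h1 : t/T0 < (n:ℝ) + 1 := Nat.lt_floor_add_one _
    rw [div_lt_iff₀ hT0pos] at h1
    nlinarith
  have hcast : (((n-1:ℕ)):ℝ) + 1 = (n:ℝ) := by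
    have : (((n-1:ℕ)):ℝ) = (n:ℝ) - 1 := by
      push_cast [Nat.cast_sub hn1]
      ring
    rw [this]; ring
  have hstart := hblock (n-1) (by rw [hcast]; exact hna)
  rw [hcast] at hstart
  set a : ℝ := (n:ℝ)*T0 with haa
  have ha0 : 0 ≤ a := by positivity
  have hyaR : ‖y a‖ ≤ R0 := hyaR0 a (by linarith)
  obtain ⟨z, hz0, hzd, hzc⟩ := hCMP a t ha0 le_rfl (by linarith) hnb hyaR
  have hstay := hδ1' z (fun u _ => hzd u)
    (by rw [hz0]; exact lt_of_le_of_lt hstart (by linarith))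
    (t - a) (by linarith)
  have hc1 := hzc t ⟨by linarith, le_rfl⟩
  rw [dist_eq_norm] at hc1
  have hmin : min (δ1/2) (ε/2) ≤ ε/2 := min_le_right _ _
  have htr : ‖y t - lam0‖ ≤ ‖y t - z (t-a)‖ + ‖z (t-a) - lam0‖ := by
    have := norm_sub_le (y t - z (t-a)) (z (t-a) - lam0)
    simpa using norm_sub_le_norm_sub_add_norm_sub (y t) (z (t-a)) lam0
  linarith

end TrackAux

open TrackAux Set Real Topology in
set_option maxHeartbeats 1000000 in
theorem scaled_ode_with_external_inputs_tracks_equilibrium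
    {d1 d2 d3 : ℕ}
    (h1 : Euc d1 → Euc d2 → Euc d3 → Euc d1)
    -- `h1` is Lipschitz continuous
    (hLip1 : ∃ L : NNReal, LipschitzWith L (fun p : Euc d1 × Euc d2 × Euc d3 => h1 p.1 p.2.1 p.2.2))
    -- (B.3.1)
    (h1inf : Euc d1 → Euc d2 → Euc d3 → Euc d1)
    (lam1inf : Euc d2 → Euc d3 → Euc d1)
    (hB1conv : ∀ K' : Set (Euc d1 × Euc d2 × Euc d3), IsCompact K' →
      TendstoUniformlyOn
        (fun (c : ℝ) (p : Euc d1 × Euc d2 × Euc d3) =>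
          c⁻¹ • h1 (c • p.1) (c • p.2.1) (c • p.2.2))
        (fun p => h1inf p.1 p.2.1 p.2.2) atTop K')
    (hB1 : ∀ y z, IsUniqueGase (fun v => h1inf v y z) (lam1inf y z))
    (hlam1infLip : ∃ L : NNReal, LipschitzWith L (fun p : Euc d2 × Euc d3 => lam1inf p.1 p.2))
    (hlam1inf0 : lam1inf 0 0 = 0)
    -- compact sets of external-input base points
    (W2 : Set (Euc d2)) (W3 : Set (Euc d3)) (hW2 : IsCompact W2) (hW3 : IsCompact W3) :
    ∀ ε > (0:ℝ), ∃ cε ≥ (1:ℝ), ∃ rε > (0:ℝ), ∃ Tε > (0:ℝ),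
      ∀ c ≥ cε, ∀ x1 : Euc d1, ‖x1‖ < 1 → ∀ x2 ∈ W2, ∀ x3 ∈ W3, ∀ t ≥ Tε,
        ∀ (xt2 : ℝ → Euc d2) (xt3 : ℝ → Euc d3),
          ContinuousOn xt2 (Set.Icc 0 t) → ContinuousOn xt3 (Set.Icc 0 t) →
          (∀ s ∈ Set.Icc (0:ℝ) t, ‖xt2 s - x2‖ < rε ∧ ‖xt3 s - x3‖ < rε) →
          ∀ y : ℝ → Euc d1,
            (∀ s ∈ Set.Icc (0:ℝ) t,
              HasDerivAt y (c⁻¹ • h1 (c • y s) (c • xt2 s) (c • xt3 s)) s) →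
            y 0 = x1 →
            ‖y t - lam1inf x2 x3‖ ≤ 2 * ε := by
  classical
  intro ε hε
  obtain ⟨L, hL⟩ := hLip1
  obtain ⟨Ll, hLl⟩ := hlam1infLip
  set Kn : NNReal := L + 1 with hKn
  have hKn1 : (1:ℝ) ≤ (Kn:ℝ) := by
    push_cast [hKn]
    have := L.coe_nonneg
    linarith
  have hLip : LipschitzWith Kn (fun p : Euc d1 × Euc d2 × Euc d3 => h1 p.1 p.2.1 p.2.2) :=
    hL.weaken (by exact le_add_of_le_of_nonneg le_rfl zero_le_one)
  rcases (W2 ×ˢ W3).eq_empty_or_nonempty with hWe | hWne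
  · refine ⟨1, le_rfl, 1, one_pos, 1, one_pos, ?_⟩
    intro c hc x1 hx1 x2 hx2 x3 hx3 t ht xt2 xt3 hcont2 hcont3 hclose y hyd hyinit
    exfalso
    have : (x2, x3) ∈ W2 ×ˢ W3 := ⟨hx2, hx3⟩
    rw [hWe] at this
    exact this
  · choose cp hcp1 rp hrp0 hrp1 Tp hTp0 hmain using
      fun p : Euc d2 × Euc d3 => key h1 Kn hKn1 hLip h1inf lam1inf hB1conv hB1 p.1 p.2 hε
    set ρ : Euc d2 × Euc d3 → ℝ := fun p => min (rp p) (ε/((Ll:ℝ)+1)) / 2 with hρ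
    have hρpos : ∀ p, 0 < ρ p := by
      intro p
      have h2 : (0:ℝ) < ε/((Ll:ℝ)+1) := by positivity
      have := hrp0 p
      simp only [hρ]
      positivity
    obtain ⟨S, hS⟩ := (hW2.prod hW3).elim_finite_subcover
      (fun p : Euc d2 × Euc d3 => Metric.ball p (ρ p)) (fun p => Metric.isOpen_ball)
      (fun p _ => mem_iUnion.mpr ⟨p, Metric.mem_ball_self (hρpos p)⟩)
    have hSne : S.Nonempty := by
      obtain ⟨q, hq⟩ := hWne
      have := hS hq
      rw [mem_iUnion₂] at this
      obtain ⟨p0, hp0, -⟩ := this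
      exact ⟨p0, hp0⟩
    refine ⟨max 1 (S.sup' hSne cp), le_max_left _ _, S.inf' hSne ρ, ?_, max 1 (S.sup' hSne Tp),
      lt_of_lt_of_le one_pos (le_max_left _ _), ?_⟩
    · obtain ⟨i, hiS, hieq⟩ := Finset.exists_mem_eq_inf' hSne ρ
      rw [hieq]; exact hρpos i
    intro c hc x1 hx1 x2 hx2 x3 hx3 t ht xt2 xt3 hcont2 hcont3 hclose y hyd hyinit
    obtain ⟨p, hpS, hpball⟩ : ∃ p ∈ S, (x2, x3) ∈ Metric.ball p (ρ p) := by
      have := hS (⟨hx2, hx3⟩ : (x2, x3) ∈ W2 ×ˢ W3)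
      rw [mem_iUnion₂] at this
      obtain ⟨p, h1p, h2p⟩ := this
      exact ⟨p, h1p, h2p⟩
    have hdist : dist ((x2, x3) : Euc d2 × Euc d3) p < ρ p := Metric.mem_ball.mp hpball
    have hd2 : dist x2 p.1 < ρ p := lt_of_le_of_lt (by rw [Prod.dist_eq]; exact le_max_left _ _) hdist
    have hd3 : dist x3 p.2 < ρ p := lt_of_le_of_lt (by rw [Prod.dist_eq]; exact le_max_right _ _) hdist
    have hrε : S.inf' hSne ρ ≤ ρ p := Finset.inf'_le _ hpS
    have hin : ∀ s ∈ Icc (0:ℝ) t, ‖xt2 s - p.1‖ < rp p ∧ ‖xt3 s - p.2‖ < rp p := by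
      intro s hs
      have h2ρ : 2 * ρ p ≤ rp p := by
        have : min (rp p) (ε/((Ll:ℝ)+1)) ≤ rp p := min_le_left _ _
        simp only [hρ]; linarith
      obtain ⟨hc2, hc3⟩ := hclose s hs
      constructor
      · have htr2 : dist (xt2 s) p.1 ≤ dist (xt2 s) x2 + dist x2 p.1 := dist_triangle _ _ _
        rw [dist_eq_norm, dist_eq_norm] at htr2
        rw [dist_eq_norm] at hd2
        have h7 := lt_of_lt_of_le hc2 hrε
        calc ‖xt2 s - p.1‖ ≤ ‖xt2 s - x2‖ + ‖x2 - p.1‖ := htr2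
        _ < ρ p + ρ p := add_lt_add h7 hd2
        _ ≤ rp p := by linarith
      · have htr3 : dist (xt3 s) p.2 ≤ dist (xt3 s) x3 + dist x3 p.2 := dist_triangle _ _ _
        rw [dist_eq_norm, dist_eq_norm] at htr3
        rw [dist_eq_norm] at hd3
        have h7 := lt_of_lt_of_le hc3 hrε
        calc ‖xt3 s - p.2‖ ≤ ‖xt3 s - x3‖ + ‖x3 - p.2‖ := htr3
        _ < ρ p + ρ p := add_lt_add h7 hd3
        _ ≤ rp p := by linarith
    have hcge : cp p ≤ c := le_trans (le_trans (Finset.le_sup' cp hpS) (le_max_right 1 _)) hc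
    have htge : Tp p ≤ t := le_trans (le_trans (Finset.le_sup' Tp hpS) (le_max_right 1 _)) ht
    have hy01 : ‖y 0‖ < 1 := by rw [hyinit]; exact hx1
    have hmn := hmain p c hcge t htge xt2 xt3 hin y hyd hy01
    -- Lipschitz bound for lam1inf
    have hlamd : ‖lam1inf p.1 p.2 - lam1inf x2 x3‖ ≤ ε := by
      have h2 := hLl.dist_le_mul ((x2, x3) : Euc d2 × Euc d3) p
      have h3 : dist (lam1inf x2 x3) (lam1inf p.1 p.2) ≤ (Ll:ℝ) * dist ((x2,x3) : Euc d2 × Euc d3) p := h2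
      have h4 : (Ll:ℝ) * dist ((x2,x3) : Euc d2 × Euc d3) p ≤ (Ll:ℝ) * (ε/((Ll:ℝ)+1)) := by
        have h5 : dist ((x2,x3) : Euc d2 × Euc d3) p ≤ ε/((Ll:ℝ)+1) := by
          have : ρ p ≤ ε/((Ll:ℝ)+1) := by
            have h8 : min (rp p) (ε/((Ll:ℝ)+1)) ≤ ε/((Ll:ℝ)+1) := min_le_right _ _
            have h9 : 0 < min (rp p) (ε/((Ll:ℝ)+1)) := lt_min (hrp0 p) (by positivity)
            simp only [hρ]; linarith
          linarith
        exact mul_le_mul_of_nonneg_left h5 Ll.coe_nonneg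
      have h6 : (Ll:ℝ) * (ε/((Ll:ℝ)+1)) ≤ ε := by
        rw [mul_comm, div_mul_eq_mul_div, div_le_iff₀ (by positivity)]
        have := Ll.coe_nonneg
        nlinarith
      rw [dist_eq_norm] at h3
      rw [norm_sub_rev]
      linarith
    have htri : ‖y t - lam1inf x2 x3‖ ≤ ‖y t - lam1inf p.1 p.2‖ + ‖lam1inf p.1 p.2 - lam1inf x2 x3‖ := by
      have := dist_triangle (y t) (lam1inf p.1 p.2) (lam1inf x2 x3)
      rw [dist_eq_norm, dist_eq_norm, dist_eq_norm] at this
      exact this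
    linarith

end
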